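/- (Local truncation error of CNFD) Let T > 0 and M > 0. Let Φ : [0,T] × ℝ → ℂ² be (b−a)-periodic in x, with all partial derivatives ∂_t^r ∂_x^s Φ for 0 ≤ r ≤ 3, 0 ≤ r + s ≤ 3 existing, continuous, and bounded in absolute value by M, and let V, A₁ : [0,T] × ℝ → ℝ be twice continuously differentiable in t with |V|, |A₁|, |∂_{tt}V|, |∂_{tt}A₁| ≤ M. Suppose Φ solves i∂_tΦ = (−iσ₁∂_x + σ₃)Φ + ε(V I₂ − A₁ σ₁)Φ on [0,T] × ℝ, where 0 < ε ≤ 1. Define the CNFD local truncation error ξⁿ_j = i (Φ(t_{n+1},x_j) − Φ(t_n,x_j))/τ + iσ₁ [δ_xΦ(t_n,·)(x_j) + δ_xΦ(t_{n+1},·)(x_j)]/2 − (σ₃ + εV(t_n + τ/2, x_j) I₂ − εA₁(t_n + τ/2, x_j) σ₁) (Φ(t_n,x_j) + Φ(t_{n+1},x_j))/2, where δ_x f(x_j) = (f(x_{j+1}) − f(x_{j−1}))/(2h). Then there exists a constant C > 0 depending only on M (and independent of ε, h, τ, n, j) such that |ξⁿ_j| ≤ C(h² + τ²) for all j = 0,…,N−1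 and all n with t_{n+1} ≤ T. -/

import Mathlib

open Complex Matrix Finset

noncomputable section

/-- The Pauli matrix σ₁. -/
def σ1 : Matrix (Fin 2) (Fin 2) ℂ := !![0, 1; 1, 0]

/-- The Pauli matrix σ₃. -/
def σ3 : Matrix (Fin 2) (Fin 2) ℂ := !![1, 0; 0, -1]

/-- Centered difference in space of a continuous function:
δ_x f(x) = (f(x+h) − f(x−h))/(2h). -/
def δxf (h : ℝ) (f : ℝ → Fin 2 → ℂ) (x : ℝ) : Fin 2 → ℂ :=
  ((2 * h : ℝ) : ℂ)⁻¹ • (f (x + h) - f (x - h))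

/-- The CNFD local truncation error at time t and grid point x:
ξ = iδ⁺_tΦ + iσ₁(δ_xΦ(t,·)(x) + δ_xΦ(t+τ,·)(x))/2
    − (σ₃ + εV(t+τ/2,x)I₂ − εA(t+τ/2,x)σ₁)(Φ(t,x) + Φ(t+τ,x))/2. -/
def cnfdXi (h τ ε : ℝ) (Φ : ℝ → ℝ → Fin 2 → ℂ) (V A : ℝ → ℝ → ℝ)
    (t x : ℝ) : Fin 2 → ℂ :=
  Complex.I • ((τ : ℂ)⁻¹ • (Φ (t + τ) x - Φ t x)) +
    Complex.I • σ1.mulVec ((2 : ℂ)⁻¹ • (δxf h (Φ t) x + δxf h (Φ (t + τ)) x)) -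
    (σ3.mulVec ((2 : ℂ)⁻¹ • (Φ t x + Φ (t + τ) x)) +
      ((ε * V (t + τ / 2) x : ℝ) : ℂ) • ((2 : ℂ)⁻¹ • (Φ t x + Φ (t + τ) x)) -
      ((ε * A (t + τ / 2) x : ℝ) : ℂ) • σ1.mulVec ((2 : ℂ)⁻¹ • (Φ t x + Φ (t + τ) x)))

section CnfdHelpers

open Set

variable {E F : Type*} [NormedAddCommGroup E] [NormedSpace ℝ E]
  [NormedAddCommGroup F] [NormedSpace ℝ F]

lemma iteratedDerivWithin_eq_iteratedDeriv_of_contDiff {n : ℕ} {f : ℝ → E}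
    (hf : ContDiff ℝ n f) {s : Set ℝ} (hs : UniqueDiffOn ℝ s) {k : ℕ} (hk : k ≤ n)
    {y : ℝ} (hy : y ∈ s) : iteratedDerivWithin k f s y = iteratedDeriv k f y := by
  have H : HasFTaylorSeriesUpToOn (n : ℕ∞) f (ftaylorSeries ℝ f) s :=
    (contDiff_iff_ftaylorSeries.mp hf).hasFTaylorSeriesUpToOn s
  have := H.eq_iteratedFDerivWithin_of_uniqueDiffOn (m := k)
    (by exact_mod_cast Nat.cast_le.mpr hk) hs hy
  rw [iteratedDerivWithin_eq_iteratedFDerivWithin, iteratedDeriv_eq_iteratedFDeriv, ← this]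
  rfl

lemma my_taylor_right {n : ℕ} {f : ℝ → E} (hf : ContDiff ℝ (n + 1) f) {K : ℝ}
    (hK : ∀ u, ‖iteratedDeriv (n + 1) f u‖ ≤ K) (s r : ℝ) (hr : 0 ≤ r) :
    ‖f (s + r) - ∑ k ∈ Finset.range (n + 1),
        ((k.factorial : ℝ)⁻¹ * r ^ k) • iteratedDeriv k f s‖ ≤ K * r ^ (n + 1) / n.factorial := by
  rcases eq_or_lt_of_le hr with rfl | hr'
  · have hsum : ∑ k ∈ Finset.range (n + 1),
        ((k.factorial : ℝ)⁻¹ * (0:ℝ) ^ k) • iteratedDeriv k f s = f s := by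
      rw [Finset.sum_eq_single 0]
      · simp
      · intro k hk hk0
        simp [zero_pow hk0]
      · simp
    simp [hsum]
  · have hab : s ≤ s + r := by linarith
    have hu : UniqueDiffOn ℝ (Icc s (s + r)) := uniqueDiffOn_Icc (by linarith)
    have heq : ∀ k : ℕ, k ≤ n + 1 → ∀ y ∈ Icc s (s + r),
        iteratedDerivWithin k f (Icc s (s + r)) y = iteratedDeriv k f y := fun k hk y hy =>
      iteratedDerivWithin_eq_iteratedDeriv_of_contDiff hf hu hk hy
    have hmem : s + r ∈ Icc s (s + r) := ⟨hab, le_rfl⟩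
    have := taylor_mean_remainder_bound (n := n) hab hf.contDiffOn hmem
      (fun y hy => by rw [heq (n+1) le_rfl y hy]; exact hK y)
    rw [taylor_within_apply] at this
    have hsum : ∑ k ∈ Finset.range (n + 1),
        ((k.factorial : ℝ)⁻¹ * (s + r - s) ^ k) • iteratedDerivWithin k f (Icc s (s + r)) s
        = ∑ k ∈ Finset.range (n + 1), ((k.factorial : ℝ)⁻¹ * r ^ k) • iteratedDeriv k f s := by
      refine Finset.sum_congr rfl fun k hk => ?_
      rw [heq k (by have := Finset.mem_range.mp hk; omega) s ⟨le_rfl, hab⟩]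
      norm_num
    rw [hsum] at this
    simpa using this

lemma my_taylor_left {n : ℕ} {f : ℝ → E} (hf : ContDiff ℝ (n + 1) f) {K : ℝ}
    (hK : ∀ u, ‖iteratedDeriv (n + 1) f u‖ ≤ K) (s r : ℝ) (hr : 0 ≤ r) :
    ‖f (s - r) - ∑ k ∈ Finset.range (n + 1),
        ((k.factorial : ℝ)⁻¹ * (-r) ^ k) • iteratedDeriv k f s‖ ≤ K * r ^ (n + 1) / n.factorial := by
  set g : ℝ → E := fun u => f (-u) with hg
  have hgc : ContDiff ℝ (n + 1) g := hf.comp contDiff_neg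
  have hKg : ∀ u, ‖iteratedDeriv (n + 1) g u‖ ≤ K := by
    intro u
    rw [hg, iteratedDeriv_comp_neg, norm_smul]
    have : ‖(-1 : ℝ) ^ (n + 1)‖ = 1 := by
      rw [norm_pow, norm_neg, norm_one, one_pow]
    rw [this, one_mul]
    exact hK _
  have := my_taylor_right hgc hKg (-s) r hr
  have h1 : g (-s + r) = f (s - r) := by rw [hg]; ring_nf
  have h2 : ∀ k, iteratedDeriv k g (-s) = (-1 : ℝ) ^ k • iteratedDeriv k f s := by
    intro k; rw [hg, iteratedDeriv_comp_neg]; norm_num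
  rw [h1] at this
  convert this using 3
  refine Finset.sum_congr rfl fun k _ => ?_
  rw [h2 k, smul_smul, neg_pow]
  congr 1
  ring

lemma sym_diff_bound {f : ℝ → E} (hf : ContDiff ℝ 3 f) {K : ℝ}
    (hK : ∀ u, ‖iteratedDeriv 3 f u‖ ≤ K) (s r : ℝ) (hr : 0 ≤ r) :
    ‖f (s + r) - f (s - r) - (2 * r) • deriv f s‖ ≤ K * r ^ 3 := by
  have hf' : ContDiff ℝ (2 + 1 : ℕ) f := by exact_mod_cast hf
  have hR := my_taylor_right (n := 2) hf' hK s r hr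
  have hL := my_taylor_left (n := 2) hf' hK s r hr
  rw [Finset.sum_range_succ, Finset.sum_range_succ, Finset.sum_range_one] at hR hL
  set D0 := iteratedDeriv 0 f s
  set D1 := iteratedDeriv 1 f s
  set D2 := iteratedDeriv 2 f s
  have key : f (s + r) - f (s - r) - (2 * r) • deriv f s =
      (f (s + r) - ((((0:ℕ).factorial : ℝ)⁻¹ * r ^ 0) • D0 + (((1:ℕ).factorial : ℝ)⁻¹ * r ^ 1) • D1
        + (((2:ℕ).factorial : ℝ)⁻¹ * r ^ 2) • D2))
      - (f (s - r) - ((((0:ℕ).factorial : ℝ)⁻¹ * (-r) ^ 0) • D0 +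
          (((1:ℕ).factorial : ℝ)⁻¹ * (-r) ^ 1) • D1
        + (((2:ℕ).factorial : ℝ)⁻¹ * (-r) ^ 2) • D2)) := by
    have hD1 : deriv f s = D1 := by simp [D1, iteratedDeriv_one]
    rw [hD1]
    simp only [Nat.factorial]
    push_cast
    match_scalars <;> ring
  rw [key]
  calc ‖_ - _‖ ≤ ‖_‖ + ‖_‖ := norm_sub_le _ _
    _ ≤ K * r ^ 3 / (2:ℕ).factorial + K * r ^ 3 / (2:ℕ).factorial := add_le_add hR hL
    _ = K * r ^ 3 := by norm_num [Nat.factorial]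

lemma sym_avg_bound {f : ℝ → E} (hf : ContDiff ℝ 2 f) {K : ℝ}
    (hK : ∀ u, ‖iteratedDeriv 2 f u‖ ≤ K) (s r : ℝ) (hr : 0 ≤ r) :
    ‖f (s + r) + f (s - r) - (2 : ℝ) • f s‖ ≤ 2 * (K * r ^ 2) := by
  have hf' : ContDiff ℝ (1 + 1 : ℕ) f := by exact_mod_cast hf
  have hR := my_taylor_right (n := 1) hf' hK s r hr
  have hL := my_taylor_left (n := 1) hf' hK s r hr
  rw [Finset.sum_range_succ, Finset.sum_range_one] at hR hL
  set D0 := iteratedDeriv 0 f s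
  set D1 := iteratedDeriv 1 f s
  have key : f (s + r) + f (s - r) - (2 : ℝ) • f s =
      (f (s + r) - ((((0:ℕ).factorial : ℝ)⁻¹ * r ^ 0) • D0 +
          (((1:ℕ).factorial : ℝ)⁻¹ * r ^ 1) • D1))
      + (f (s - r) - ((((0:ℕ).factorial : ℝ)⁻¹ * (-r) ^ 0) • D0 +
          (((1:ℕ).factorial : ℝ)⁻¹ * (-r) ^ 1) • D1)) := by
    have hD0 : f s = D0 := by simp [D0]
    rw [hD0]
    simp only [Nat.factorial]
    push_cast
    match_scalars <;> ring
  rw [key]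
  calc ‖_ + _‖ ≤ ‖_‖ + ‖_‖ := norm_add_le _ _
    _ ≤ K * r ^ 2 / (1:ℕ).factorial + K * r ^ 2 / (1:ℕ).factorial := add_le_add hR hL
    _ = 2 * (K * r ^ 2) := by norm_num [Nat.factorial]; ring

lemma iteratedFDeriv_comp_add_const {f : E → F} {n : ℕ} (hf : ContDiff ℝ n f) {k : ℕ}
    (hk : k ≤ n) (c : E) (q : E) :
    iteratedFDeriv ℝ k (fun p => f (p + c)) q = iteratedFDeriv ℝ k f (q + c) := by
  induction k generalizing q with
  | zero => ext m; simp
  | succ k ih =>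
    have hk' : k ≤ n := by omega
    ext m
    rw [iteratedFDeriv_succ_apply_left, iteratedFDeriv_succ_apply_left]
    have hfe : iteratedFDeriv ℝ k (fun p => f (p + c)) = fun q => iteratedFDeriv ℝ k f (q + c) :=
      funext fun q => ih hk' q
    have hdiff : DifferentiableAt ℝ (iteratedFDeriv ℝ k f) (q + c) :=
      (hf.differentiable_iteratedFDeriv (by exact_mod_cast hk)) (q + c)
    have h1 : HasFDerivAt (fun p => iteratedFDeriv ℝ k f (p + c))
        (fderiv ℝ (iteratedFDeriv ℝ k f) (q + c)) q := by
      have := hdiff.hasFDerivAt.comp q ((hasFDerivAt_id q).add_const c)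
      exact this
    rw [hfe, h1.fderiv]

lemma norm_iteratedDeriv_comp_clm {f : ℝ × ℝ → F} {n : ℕ} (hf : ContDiff ℝ n f) {k : ℕ}
    (hk : k ≤ n) (L : ℝ →L[ℝ] ℝ × ℝ) (hL : ‖L‖ ≤ 1) (c : ℝ × ℝ) (t : ℝ) :
    ‖iteratedDeriv k (fun u => f (L u + c)) t‖ ≤ ‖iteratedFDeriv ℝ k f (L t + c)‖ := by
  have hshift : ContDiff ℝ n (fun p : ℝ × ℝ => f (p + c)) :=
    hf.comp (contDiff_id.add contDiff_const)
  have hcomp : (fun u : ℝ => f (L u + c)) = (fun p : ℝ × ℝ => f (p + c)) ∘ L := rfl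
  calc ‖iteratedDeriv k (fun u => f (L u + c)) t‖
      = ‖iteratedFDeriv ℝ k (fun u : ℝ => f (L u + c)) t‖ :=
        (norm_iteratedFDeriv_eq_norm_iteratedDeriv).symm
    _ = ‖(iteratedFDeriv ℝ k (fun p : ℝ × ℝ => f (p + c)) (L t)).compContinuousLinearMap
          fun _ => L‖ := by
        rw [hcomp, L.iteratedFDeriv_comp_right hshift t (by exact_mod_cast hk)]
    _ ≤ ‖iteratedFDeriv ℝ k (fun p : ℝ × ℝ => f (p + c)) (L t)‖ * ∏ _i : Fin k, ‖L‖ :=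
        ContinuousMultilinearMap.norm_compContinuousLinearMap_le _ _
    _ ≤ ‖iteratedFDeriv ℝ k (fun p : ℝ × ℝ => f (p + c)) (L t)‖ * 1 := by
        refine mul_le_mul_of_nonneg_left ?_ (norm_nonneg _)
        calc ∏ _i : Fin k, ‖L‖ ≤ ∏ _i : Fin k, (1:ℝ) :=
              Finset.prod_le_prod (fun _ _ => norm_nonneg _) (fun _ _ => hL)
          _ = 1 := by simp
    _ = ‖iteratedFDeriv ℝ k f (L t + c)‖ := by
        rw [mul_one, iteratedFDeriv_comp_add_const hf hk c (L t)]

lemma norm_iteratedDeriv_slice_fst {f : ℝ × ℝ → F} {n : ℕ} (hf : ContDiff ℝ n f) {k : ℕ}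
    (hk : k ≤ n) (x t : ℝ) :
    ‖iteratedDeriv k (fun u => f (u, x)) t‖ ≤ ‖iteratedFDeriv ℝ k f (t, x)‖ := by
  have hL : ‖(ContinuousLinearMap.inl ℝ ℝ ℝ)‖ ≤ 1 := by
    refine ContinuousLinearMap.opNorm_le_bound _ zero_le_one fun u => ?_
    simp [Prod.norm_def]
  have := norm_iteratedDeriv_comp_clm hf hk (ContinuousLinearMap.inl ℝ ℝ ℝ) hL (0, x) t
  simpa using this

lemma norm_iteratedDeriv_slice_snd {f : ℝ × ℝ → F} {n : ℕ} (hf : ContDiff ℝ n f) {k : ℕ}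
    (hk : k ≤ n) (t y : ℝ) :
    ‖iteratedDeriv k (fun v => f (t, v)) y‖ ≤ ‖iteratedFDeriv ℝ k f (t, y)‖ := by
  have hL : ‖(ContinuousLinearMap.inr ℝ ℝ ℝ)‖ ≤ 1 := by
    refine ContinuousLinearMap.opNorm_le_bound _ zero_le_one fun u => ?_
    simp [Prod.norm_def]
  have := norm_iteratedDeriv_comp_clm hf hk (ContinuousLinearMap.inr ℝ ℝ ℝ) hL (t, 0) y
  simpa using this

lemma sigma1_mulVec (v : Fin 2 → ℂ) : σ1.mulVec v = ![v 1, v 0] := by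
  funext i
  fin_cases i <;> simp [σ1, Matrix.mulVec, dotProduct, Fin.sum_univ_two]

lemma sigma3_mulVec (v : Fin 2 → ℂ) : σ3.mulVec v = ![v 0, -v 1] := by
  funext i
  fin_cases i <;> simp [σ3, Matrix.mulVec, dotProduct, Fin.sum_univ_two]

lemma norm_sigma1_mulVec (v : Fin 2 → ℂ) : ‖σ1.mulVec v‖ ≤ ‖v‖ := by
  rw [sigma1_mulVec, pi_norm_le_iff_of_nonneg (norm_nonneg v)]
  intro i
  fin_cases i <;> simpa using norm_le_pi_norm v _

lemma norm_sigma3_mulVec (v : Fin 2 → ℂ) : ‖σ3.mulVec v‖ ≤ ‖v‖ := by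
  rw [sigma3_mulVec, pi_norm_le_iff_of_nonneg (norm_nonneg v)]
  intro i
  fin_cases i <;> simpa using norm_le_pi_norm v _

end CnfdHelpers

set_option maxHeartbeats 1000000 in
/-- Local truncation error bound of the CNFD method for the 1D Dirac
equation with small potentials: |ξⁿ_j| ≤ C(h² + τ²), with C depending
only on the regularity bound M. -/
theorem cnfd_local_truncation_error (M : ℝ) (hM : 0 < M) :
    ∃ C > 0,
      ∀ (T a b : ℝ) (N : ℕ) (h τ ε : ℝ) (Φ : ℝ → ℝ → Fin 2 → ℂ) (V A : ℝ → ℝ → ℝ),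
        0 < T → a < b → 0 < N → Even N → h = (b - a) / N → 0 < τ → 0 < ε → ε ≤ 1 →
        -- regularity and bounds of the exact solution
        ContDiff ℝ 3 (fun p : ℝ × ℝ => Φ p.1 p.2) →
        (∀ p : ℝ × ℝ, ∀ k : ℕ, k ≤ 3 →
          ‖iteratedFDeriv ℝ k (fun q : ℝ × ℝ => Φ q.1 q.2) p‖ ≤ M) →
        (∀ t x, Φ t (x + (b - a)) = Φ t x) →
        -- regularity and bounds of the potentials
        (∀ x, ContDiff ℝ 2 fun t => V t x) → (∀ x, ContDiff ℝ 2 fun t => A t x) →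
        (∀ t x, |V t x| ≤ M ∧ |A t x| ≤ M ∧
          |iteratedDeriv 2 (fun s => V s x) t| ≤ M ∧
          |iteratedDeriv 2 (fun s => A s x) t| ≤ M) →
        -- Φ solves the Dirac equation on [0,T] × ℝ
        (∀ t x, 0 ≤ t → t ≤ T →
          Complex.I • deriv (fun s => Φ s x) t =
            (-Complex.I) • σ1.mulVec (deriv (fun y => Φ t y) x) + σ3.mulVec (Φ t x) +
              (ε : ℂ) • (((V t x : ℝ) : ℂ) • Φ t x -
                ((A t x : ℝ) : ℂ) • σ1.mulVec (Φ t x))) →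
        -- conclusion: the local truncation error is O(h² + τ²)
        ∀ (n : ℕ) (j : ℤ), 0 ≤ j → j < (N : ℤ) → ((n : ℝ) + 1) * τ ≤ T →
          Real.sqrt (∑ i, ‖cnfdXi h τ ε Φ V A ((n : ℝ) * τ) (a + (j : ℝ) * h) i‖ ^ 2) ≤
            C * (h ^ 2 + τ ^ 2) := by
  refine ⟨16 * (M + 1) ^ 2, by positivity, ?_⟩
  intro T a b N h τ ε Φ V A hT hab hN hNe hh hτ hε hε1 hΦc hΦb hper hVc hAc hVAb hpde
  intro n j hj0 hjN hnT
  set F : ℝ × ℝ → Fin 2 → ℂ := fun p => Φ p.1 p.2 with hF_def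
  have hF : ContDiff ℝ (3 : ℕ) F := by exact_mod_cast hΦc
  have hhpos : 0 < h := by
    rw [hh]; apply div_pos (by linarith) (by exact_mod_cast hN)
  set t : ℝ := (n : ℝ) * τ with ht_def
  set x : ℝ := a + (j : ℝ) * h with hx_def
  set r : ℝ := τ / 2 with hr_def
  set s : ℝ := t + r with hs_def
  have hrpos : 0 < r := by rw [hr_def]; positivity
  have hsr1 : s + r = t + τ := by rw [hs_def, hr_def]; ring
  have hsr2 : s - r = t := by rw [hs_def]; ring
  have hts : t + τ / 2 = s := by rw [hs_def, hr_def]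
  have hs0 : 0 ≤ s := by
    have h1 : (0:ℝ) ≤ (n:ℝ) * τ := by positivity
    rw [hs_def, ht_def]; rw [hr_def]; linarith
  have hsT : s ≤ T := by
    have h1 : s ≤ ((n:ℝ) + 1) * τ := by rw [hs_def, ht_def, hr_def]; nlinarith
    linarith
  -- regularity and bounds for slices
  have hftc : ContDiff ℝ (3 : ℕ) (fun u => Φ u x) := by
    exact hF.comp (ContDiff.prodMk contDiff_id contDiff_const : ContDiff ℝ (3:ℕ) fun u : ℝ => (u, x))
  have hft3 : ∀ u, ‖iteratedDeriv 3 (fun u' => Φ u' x) u‖ ≤ M := fun u =>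
    (norm_iteratedDeriv_slice_fst hF le_rfl x u).trans (hΦb (u, x) 3 le_rfl)
  have hft2 : ∀ u, ‖iteratedDeriv 2 (fun u' => Φ u' x) u‖ ≤ M := fun u =>
    (norm_iteratedDeriv_slice_fst hF (by norm_num) x u).trans (hΦb (u, x) 2 (by norm_num))
  set G : ℝ × ℝ → Fin 2 → ℂ := fun p => fderiv ℝ F p ((0:ℝ), (1:ℝ)) with hG_def
  have hFd : ContDiff ℝ ((2:ℕ) : WithTop ℕ∞) (fderiv ℝ F) := by
    apply hΦc.fderiv_right
    norm_num
  have hGc : ContDiff ℝ (2 : ℕ) G := hFd.clm_apply contDiff_const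
  have hGb : ∀ p : ℝ × ℝ, ∀ k : ℕ, k ≤ 2 → ‖iteratedFDeriv ℝ k G p‖ ≤ M := by
    intro p k hk
    have hev : G = ⇑(ContinuousLinearMap.apply ℝ (Fin 2 → ℂ) ((0:ℝ),(1:ℝ))) ∘ (fderiv ℝ F) := rfl
    rw [hev, ContinuousLinearMap.iteratedFDeriv_comp_left _ (x := p) hFd.contDiffAt (by exact_mod_cast hk)]
    have hevn : ‖ContinuousLinearMap.apply ℝ (Fin 2 → ℂ) ((0:ℝ),(1:ℝ))‖ ≤ 1 := by
      refine ContinuousLinearMap.opNorm_le_bound _ zero_le_one fun L => ?_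
      have h2 := L.le_opNorm ((0:ℝ),(1:ℝ))
      have h1 : ‖((0:ℝ),(1:ℝ))‖ = 1 := by simp [Prod.norm_def]
      simpa [h1, mul_comm] using h2
    calc ‖(ContinuousLinearMap.apply ℝ (Fin 2 → ℂ) ((0:ℝ),(1:ℝ))).compContinuousMultilinearMap
          (iteratedFDeriv ℝ k (fderiv ℝ F) p)‖
        ≤ ‖ContinuousLinearMap.apply ℝ (Fin 2 → ℂ) ((0:ℝ),(1:ℝ))‖ *
            ‖iteratedFDeriv ℝ k (fderiv ℝ F) p‖ :=
          ContinuousLinearMap.norm_compContinuousMultilinearMap_le _ _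
      _ ≤ 1 * ‖iteratedFDeriv ℝ (k+1) F p‖ := by
          rw [norm_iteratedFDeriv_fderiv]
          exact mul_le_mul_of_nonneg_right hevn (norm_nonneg _)
      _ ≤ M := by rw [one_mul]; exact hΦb p (k+1) (by omega)
  have hDx : ∀ u y : ℝ, deriv (fun y' => Φ u y') y = G (u, y) := by
    intro u y
    have hd : HasDerivAt (fun y' => Φ u y') (fderiv ℝ F (u, y) ((0:ℝ),(1:ℝ))) y := by
      have hF1 : HasFDerivAt F (fderiv ℝ F (u, y)) (u, y) :=
        ((hF.differentiable (by norm_num)) (u, y)).hasFDerivAt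
      have := hF1.comp_hasDerivAt y ((hasDerivAt_const y u).prodMk (hasDerivAt_id y))
      exact this
    exact hd.deriv
  have hgxc : ContDiff ℝ (2 : ℕ) (fun u => G (u, x)) := by
    exact hGc.comp (ContDiff.prodMk contDiff_id contDiff_const : ContDiff ℝ (2:ℕ) fun u : ℝ => (u, x))
  have hgx2 : ∀ u, ‖iteratedDeriv 2 (fun u' => G (u', x)) u‖ ≤ M := fun u =>
    (norm_iteratedDeriv_slice_fst hGc le_rfl x u).trans (hGb (u, x) 2 le_rfl)
  have hfxc : ∀ u : ℝ, ContDiff ℝ (3 : ℕ) (fun y => Φ u y) := fun u =>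
    hF.comp (ContDiff.prodMk contDiff_const contDiff_id : ContDiff ℝ (3:ℕ) fun y : ℝ => (u, y))
  have hfx3 : ∀ u y, ‖iteratedDeriv 3 (fun y' => Φ u y') y‖ ≤ M := fun u y =>
    (norm_iteratedDeriv_slice_snd hF le_rfl u y).trans (hΦb (u, y) 3 le_rfl)
  have hτℂ : ((τ : ℝ) : ℂ) ≠ 0 := Complex.ofReal_ne_zero.mpr (ne_of_gt hτ)
  have h2hℂ : ((2 * h : ℝ) : ℂ) ≠ 0 := Complex.ofReal_ne_zero.mpr (by positivity)
  -- error term 1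
  set e1 : Fin 2 → ℂ := (τ : ℂ)⁻¹ • (Φ (t + τ) x - Φ t x) - deriv (fun u => Φ u x) s
    with he1_def
  have hE1 : ‖e1‖ ≤ M * τ ^ 2 / 8 := by
    have hsd : ‖Φ (t + τ) x - Φ t x - (2 * r) • deriv (fun u => Φ u x) s‖ ≤ M * r ^ 3 := by
      have := sym_diff_bound (hftc.of_le (by norm_num)) hft3 s r hrpos.le
      rw [hsr1, hsr2] at this
      exact this
    have hcancel : (τ : ℂ)⁻¹ • ((2 * r : ℝ) • deriv (fun u => Φ u x) s) =
        deriv (fun u => Φ u x) s := by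
      rw [← Complex.coe_smul, smul_smul,
        show ((2 * r : ℝ) : ℂ) = (τ : ℂ) by rw [hr_def]; push_cast; ring,
        inv_mul_cancel₀ hτℂ, one_smul]
    have hkey : (τ : ℂ)⁻¹ • (Φ (t + τ) x - Φ t x - (2 * r) • deriv (fun u => Φ u x) s) =
        e1 := by
      rw [smul_sub, hcancel, he1_def]
    rw [← hkey, norm_smul]
    have hn : ‖(τ : ℂ)⁻¹‖ = τ⁻¹ := by
      rw [norm_inv, Complex.norm_real, Real.norm_eq_abs, abs_of_pos hτ]
    rw [hn]
    calc τ⁻¹ * ‖Φ (t + τ) x - Φ t x - (2 * r) • deriv (fun u => Φ u x) s‖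
        ≤ τ⁻¹ * (M * r ^ 3) := mul_le_mul_of_nonneg_left hsd (by positivity)
      _ = M * τ ^ 2 / 8 := by rw [hr_def]; field_simp; ring
  -- centered difference error
  have hD : ∀ u : ℝ, ‖δxf h (Φ u) x - G (u, x)‖ ≤ M * h ^ 2 / 2 := by
    intro u
    have hsd : ‖Φ u (x + h) - Φ u (x - h) - (2 * h) • G (u, x)‖ ≤ M * h ^ 3 := by
      have := sym_diff_bound ((hfxc u).of_le (by norm_num)) (hfx3 u) x h hhpos.le
      rw [hDx u x] at this
      exact this
    have hcancel : ((2 * h : ℝ) : ℂ)⁻¹ • ((2 * h : ℝ) • G (u, x)) = G (u, x) := by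
      rw [← Complex.coe_smul, smul_smul, inv_mul_cancel₀ h2hℂ, one_smul]
    have hkey : ((2 * h : ℝ) : ℂ)⁻¹ • (Φ u (x + h) - Φ u (x - h) - (2 * h) • G (u, x)) =
        δxf h (Φ u) x - G (u, x) := by
      rw [smul_sub, hcancel, δxf]
    rw [← hkey, norm_smul]
    have hn : ‖((2 * h : ℝ) : ℂ)⁻¹‖ = (2 * h)⁻¹ := by
      rw [norm_inv, Complex.norm_real, Real.norm_eq_abs, abs_of_pos (by positivity)]
    rw [hn]
    calc (2 * h)⁻¹ * ‖Φ u (x + h) - Φ u (x - h) - (2 * h) • G (u, x)‖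
        ≤ (2 * h)⁻¹ * (M * h ^ 3) := mul_le_mul_of_nonneg_left hsd (by positivity)
      _ = M * h ^ 2 / 2 := by field_simp
  -- average of spatial derivative error
  have hc2 : ∀ v : Fin 2 → ℂ, (2 : ℂ)⁻¹ • ((2 : ℝ) • v) = v := by
    intro v
    rw [← Complex.coe_smul, smul_smul, show ((2:ℝ) : ℂ) = (2 : ℂ) by norm_num,
      inv_mul_cancel₀ (by norm_num : (2:ℂ) ≠ 0), one_smul]
  have hAvg : ‖(2 : ℂ)⁻¹ • (G (t, x) + G (t + τ, x)) - G (s, x)‖ ≤ M * τ ^ 2 / 4 := by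
    have hsa : ‖G (t + τ, x) + G (t, x) - (2:ℝ) • G (s, x)‖ ≤ 2 * (M * r ^ 2) := by
      have := sym_avg_bound (hgxc.of_le (by norm_num)) hgx2 s r hrpos.le
      rw [hsr1, hsr2] at this
      exact this
    have hkey : (2 : ℂ)⁻¹ • (G (t + τ, x) + G (t, x) - (2:ℝ) • G (s, x)) =
        (2 : ℂ)⁻¹ • (G (t, x) + G (t + τ, x)) - G (s, x) := by
      rw [smul_sub, hc2, add_comm (G (t + τ, x))]
    rw [← hkey, norm_smul]
    have hn : ‖(2 : ℂ)⁻¹‖ = 2⁻¹ := by norm_num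
    rw [hn]
    calc 2⁻¹ * ‖G (t + τ, x) + G (t, x) - (2:ℝ) • G (s, x)‖
        ≤ 2⁻¹ * (2 * (M * r ^ 2)) := mul_le_mul_of_nonneg_left hsa (by norm_num)
      _ = M * τ ^ 2 / 4 := by rw [hr_def]; ring
  -- error term 2
  set e2 : Fin 2 → ℂ :=
    (2 : ℂ)⁻¹ • (δxf h (Φ t) x + δxf h (Φ (t + τ)) x) - G (s, x) with he2_def
  have hE2 : ‖e2‖ ≤ M * h ^ 2 / 2 + M * τ ^ 2 / 4 := by
    have hkey : e2 = (2 : ℂ)⁻¹ • (δxf h (Φ t) x - G (t, x)) +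
        (2 : ℂ)⁻¹ • (δxf h (Φ (t + τ)) x - G (t + τ, x)) +
        ((2 : ℂ)⁻¹ • (G (t, x) + G (t + τ, x)) - G (s, x)) := by
      rw [he2_def]
      module
    rw [hkey]
    have hn2 : ‖(2 : ℂ)⁻¹‖ = 2⁻¹ := by norm_num
    have hn1 : ‖(2 : ℂ)⁻¹ • (δxf h (Φ t) x - G (t, x))‖ ≤ 2⁻¹ * (M * h ^ 2 / 2) := by
      rw [norm_smul, hn2]
      exact mul_le_mul_of_nonneg_left (hD t) (by norm_num)
    have hn1' : ‖(2 : ℂ)⁻¹ • (δxf h (Φ (t + τ)) x - G (t + τ, x))‖ ≤ 2⁻¹ * (M * h ^ 2 / 2) := by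
      rw [norm_smul, hn2]
      exact mul_le_mul_of_nonneg_left (hD (t + τ)) (by norm_num)
    calc ‖_ + _ + _‖ ≤ ‖_ + _‖ + ‖_‖ := norm_add_le _ _
      _ ≤ ‖_‖ + ‖_‖ + ‖_‖ := by gcongr ?_ + _; exact norm_add_le _ _
      _ ≤ 2⁻¹ * (M * h ^ 2 / 2) + 2⁻¹ * (M * h ^ 2 / 2) + M * τ ^ 2 / 4 :=
          add_le_add (add_le_add hn1 hn1') hAvg
      _ = M * h ^ 2 / 2 + M * τ ^ 2 / 4 := by ring
  -- error term 3
  set e3 : Fin 2 → ℂ := (2 : ℂ)⁻¹ • (Φ t x + Φ (t + τ) x) - Φ s x with he3_def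
  have hE3 : ‖e3‖ ≤ M * τ ^ 2 / 4 := by
    have hsa : ‖Φ (t + τ) x + Φ t x - (2:ℝ) • Φ s x‖ ≤ 2 * (M * r ^ 2) := by
      have := sym_avg_bound (hftc.of_le (by norm_num)) hft2 s r hrpos.le
      rw [hsr1, hsr2] at this
      exact this
    have hkey : (2 : ℂ)⁻¹ • (Φ (t + τ) x + Φ t x - (2:ℝ) • Φ s x) = e3 := by
      rw [smul_sub, hc2, add_comm (Φ (t + τ) x), he3_def]
    rw [← hkey, norm_smul]
    have hn : ‖(2 : ℂ)⁻¹‖ = 2⁻¹ := by norm_num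
    rw [hn]
    calc 2⁻¹ * ‖Φ (t + τ) x + Φ t x - (2:ℝ) • Φ s x‖
        ≤ 2⁻¹ * (2 * (M * r ^ 2)) := mul_le_mul_of_nonneg_left hsa (by norm_num)
      _ = M * τ ^ 2 / 4 := by rw [hr_def]; ring
  -- the algebraic identity
  have hpde' := hpde s x hs0 hsT
  rw [hDx s x] at hpde'
  set cV : ℂ := ((ε * V s x : ℝ) : ℂ) with hcV_def
  set cA : ℂ := ((ε * A s x : ℝ) : ℂ) with hcA_def
  have hxi : cnfdXi h τ ε Φ V A t x =
      Complex.I • e1 + Complex.I • σ1.mulVec e2 - σ3.mulVec e3 - cV • e3 +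
        cA • σ1.mulVec e3 := by
    rw [cnfdXi, hts, he1_def, he2_def, he3_def]
    have hcVe : (((ε * V s x : ℝ)) : ℂ) = (ε : ℂ) * ((V s x : ℝ) : ℂ) := by push_cast; ring
    have hcAe : (((ε * A s x : ℝ)) : ℂ) = (ε : ℂ) * ((A s x : ℝ) : ℂ) := by push_cast; ring
    simp only [hcV_def, hcA_def, hcVe, hcAe, Matrix.mulVec_add, Matrix.mulVec_smul,
      Matrix.mulVec_sub]
    linear_combination (norm := module) hpde'
  -- norm bounds
  have hVb := (hVAb s x).1
  have hAb := (hVAb s x).2.1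
  have hcVn : ‖cV‖ ≤ M := by
    rw [hcV_def, Complex.norm_real, Real.norm_eq_abs, abs_mul, abs_of_pos hε]
    calc ε * |V s x| ≤ 1 * M := mul_le_mul hε1 hVb (abs_nonneg _) zero_le_one
      _ = M := one_mul M
  have hcAn : ‖cA‖ ≤ M := by
    rw [hcA_def, Complex.norm_real, Real.norm_eq_abs, abs_mul, abs_of_pos hε]
    calc ε * |A s x| ≤ 1 * M := mul_le_mul hε1 hAb (abs_nonneg _) zero_le_one
      _ = M := one_mul M
  have hnormxi : ‖cnfdXi h τ ε Φ V A t x‖ ≤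
      M * τ ^ 2 / 8 + (M * h ^ 2 / 2 + M * τ ^ 2 / 4) + M * τ ^ 2 / 4 +
        M * (M * τ ^ 2 / 4) + M * (M * τ ^ 2 / 4) := by
    rw [hxi]
    have hIe1 : ‖Complex.I • e1‖ = ‖e1‖ := by rw [norm_smul, Complex.norm_I, one_mul]
    have hIe2 : ‖Complex.I • σ1.mulVec e2‖ ≤ ‖e2‖ := by
      rw [norm_smul, Complex.norm_I, one_mul]; exact norm_sigma1_mulVec e2
    have hs3 : ‖σ3.mulVec e3‖ ≤ ‖e3‖ := norm_sigma3_mulVec e3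
    have hcv : ‖cV • e3‖ ≤ M * ‖e3‖ := by
      rw [norm_smul]; exact mul_le_mul_of_nonneg_right hcVn (norm_nonneg _)
    have hca : ‖cA • σ1.mulVec e3‖ ≤ M * ‖e3‖ := by
      rw [norm_smul]
      exact mul_le_mul hcAn (norm_sigma1_mulVec e3) (norm_nonneg _) hM.le
    calc ‖Complex.I • e1 + Complex.I • σ1.mulVec e2 - σ3.mulVec e3 - cV • e3 +
          cA • σ1.mulVec e3‖
        ≤ ‖Complex.I • e1 + Complex.I • σ1.mulVec e2 - σ3.mulVec e3 - cV • e3‖ +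
            ‖cA • σ1.mulVec e3‖ := norm_add_le _ _
      _ ≤ ‖Complex.I • e1 + Complex.I • σ1.mulVec e2 - σ3.mulVec e3‖ + ‖cV • e3‖ +
            ‖cA • σ1.mulVec e3‖ := by gcongr ?_ + _; exact norm_sub_le _ _
      _ ≤ ‖Complex.I • e1 + Complex.I • σ1.mulVec e2‖ + ‖σ3.mulVec e3‖ + ‖cV • e3‖ +
            ‖cA • σ1.mulVec e3‖ := by gcongr ?_ + _ + _; exact norm_sub_le _ _
      _ ≤ ‖Complex.I • e1‖ + ‖Complex.I • σ1.mulVec e2‖ + ‖σ3.mulVec e3‖ + ‖cV • e3‖ +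
            ‖cA • σ1.mulVec e3‖ := by gcongr ?_ + _ + _ + _; exact norm_add_le _ _
      _ ≤ M * τ ^ 2 / 8 + (M * h ^ 2 / 2 + M * τ ^ 2 / 4) + M * τ ^ 2 / 4 +
            M * (M * τ ^ 2 / 4) + M * (M * τ ^ 2 / 4) := by
          rw [hIe1]
          exact add_le_add (add_le_add (add_le_add (add_le_add hE1 (hIe2.trans hE2))
            (hs3.trans hE3)) (hcv.trans (by gcongr))) (hca.trans (by gcongr))
  -- conclude via the Euclidean norm
  set ξ := cnfdXi h τ ε Φ V A t x with hξ_def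
  have hsqrt : Real.sqrt (∑ i, ‖ξ i‖ ^ 2) ≤ 2 * ‖ξ‖ := by
    have h0 : ‖ξ 0‖ ≤ ‖ξ‖ := norm_le_pi_norm ξ 0
    have h1 : ‖ξ 1‖ ≤ ‖ξ‖ := norm_le_pi_norm ξ 1
    have hsum : ∑ i, ‖ξ i‖ ^ 2 = ‖ξ 0‖ ^ 2 + ‖ξ 1‖ ^ 2 := by simp [Fin.sum_univ_two]
    rw [hsum]
    calc Real.sqrt (‖ξ 0‖ ^ 2 + ‖ξ 1‖ ^ 2) ≤ Real.sqrt ((2 * ‖ξ‖) ^ 2) := by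
          apply Real.sqrt_le_sqrt
          nlinarith [norm_nonneg ξ, norm_nonneg (ξ 0), norm_nonneg (ξ 1)]
      _ = 2 * ‖ξ‖ := Real.sqrt_sq (by positivity)
  refine hsqrt.trans ?_
  have hh2 : (0:ℝ) ≤ h ^ 2 := sq_nonneg h
  have hτ2 : (0:ℝ) ≤ τ ^ 2 := sq_nonneg τ
  calc 2 * ‖ξ‖
      ≤ 2 * (M * τ ^ 2 / 8 + (M * h ^ 2 / 2 + M * τ ^ 2 / 4) + M * τ ^ 2 / 4 +
          M * (M * τ ^ 2 / 4) + M * (M * τ ^ 2 / 4)) :=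
        mul_le_mul_of_nonneg_left hnormxi (by norm_num)
    _ ≤ 16 * (M + 1) ^ 2 * (h ^ 2 + τ ^ 2) := by nlinarith [sq_nonneg (M + 1), mul_pos hM hM]

end
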